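/- Let A be an abelian category and S a support tilting subcategory. If X is an object with projective dimension at most 1 that is a subquotient of an object of S and satisfies Ext¹(S, X) = 0 and Ext¹(X, S) = 0, then X is isomorphic to a direct summand of an object of S; in particular if X is indecomposable then X lies in the essential closure of S. -/

import Mathlib

open CategoryTheory Limits Opposite

noncomputable section

/-- A full subcategory (given by its set of objects) is precovering. -/
def IsPrecovering {A : Type*} [Category A] (V : Set A) : Prop :=
  ∀ x : A, ∃ (v : A) (_ : v ∈ V) (p : v ⟶ x),
    ∀ v' ∈ V, ∀ f : v' ⟶ x, ∃ g : v' ⟶ v, g ≫ p = f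

/-- A full subcategory (given by its set of objects) is preenveloping. -/
def IsPreenveloping {A : Type*} [Category A] (V : Set A) : Prop :=
  ∀ x : A, ∃ (v : A) (_ : v ∈ V) (i : x ⟶ v),
    ∀ v' ∈ V, ∀ f : x ⟶ v', ∃ g : v ⟶ v', i ≫ g = f

/-- `Y` is a subquotient of `w`: a quotient of a subobject of `w`. -/
def IsSubquotientOf {A : Type*} [Category A] [Abelian A] (Y w : A) : Prop :=
  ∃ (Z : A) (i : Z ⟶ w) (p : Z ⟶ Y), Mono i ∧ Epi p

/-- A support tilting subcategory of an abelian category: closed under finite direct sums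
and direct summands, precovering and preenveloping, `Ext²(S, -) = 0`, `Ext¹(S, S) = 0`,
and every subquotient `y` of an object of `S` with `Ext¹(S, y) = 0` is a quotient of an
object of `S`. -/
def SupportTilting (k : Type*) [Field k] {A : Type*} [Category A] [Abelian A] [Linear k A]
    [EnoughProjectives A] (St : Set A) : Prop :=
  (∀ X ∈ St, ∀ Y ∈ St, (X ⊞ Y) ∈ St) ∧
  (∀ X Y : A, (X ⊞ Y) ∈ St → X ∈ St) ∧
  IsPrecovering St ∧ IsPreenveloping St ∧
  (∀ s ∈ St, ∀ Y : A, Subsingleton (((Ext k A 2).obj (op s)).obj Y)) ∧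
  (∀ s ∈ St, ∀ s' ∈ St, Subsingleton (((Ext k A 1).obj (op s)).obj s')) ∧
  (∀ Y : A, (∃ s ∈ St, IsSubquotientOf Y s) →
    (∀ s ∈ St, Subsingleton (((Ext k A 1).obj (op s)).obj Y)) →
    ∃ s ∈ St, ∃ p : s ⟶ Y, Epi p)

section Helpers

lemma moduleCat_subsingleton_iff_isZero {k : Type*} [Field k] (M : ModuleCat k) :
    Subsingleton M ↔ IsZero M :=
  ⟨fun _ => ModuleCat.isZero_of_subsingleton M, fun h => by
    constructor
    intro a b
    have hid : (𝟙 M : M ⟶ M) = 0 := h.eq_of_src _ _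
    have hz : ∀ x : M, x = 0 := fun x => by
      calc x = (𝟙 M : M ⟶ M) x := rfl
      _ = (0 : M ⟶ M) x := by rw [hid]
      _ = 0 := rfl
    rw [hz a, hz b]⟩

variable {k : Type*} [Field k] {A : Type*} [Category A] [Abelian A] [Linear k A]
  [EnoughProjectives A]

lemma ext_subsingleton_iff (W Y : A) (P : ProjectiveResolution W) (m : ℕ) :
    Subsingleton (((Ext k A (m+1)).obj (op W)).obj Y) ↔
      ∀ f : P.complex.X (m+1) ⟶ Y, P.complex.d (m+2) (m+1) ≫ f = 0 →
        ∃ g : P.complex.X m ⟶ Y, P.complex.d (m+1) m ≫ g = f := by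
  rw [(ProjectiveResolution.isoExt (R := k) P (m+1) Y).toLinearEquiv.toEquiv.subsingleton_congr,
    moduleCat_subsingleton_iff_isZero, ← HomologicalComplex.exactAt_iff_isZero_homology,
    HomologicalComplex.exactAt_iff' _ m (m+1) (m+2) (by simp) (by simp),
    ShortComplex.moduleCat_exact_iff]
  constructor
  · intro h f hf
    obtain ⟨g, hg⟩ := h f (by exact hf)
    exact ⟨g, by exact hg⟩
  · intro h f hf
    obtain ⟨g, hg⟩ := h f (by exact hf)
    exact ⟨g, by exact hg⟩

/-- Covariant long exact sequence segment: if `q : t ⟶ X'` is epi, every map `W ⟶ X'`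
lifts along `q`, and `Ext¹(W, t) = 0`, then `Ext¹(W, kernel q) = 0`. -/
lemma ext_one_kernel_subsingleton {W t X' : A} (q : t ⟶ X') [Epi q]
    (hlift : ∀ f : W ⟶ X', ∃ g : W ⟶ t, g ≫ q = f)
    (ht : Subsingleton (((Ext k A 1).obj (op W)).obj t)) :
    Subsingleton (((Ext k A 1).obj (op W)).obj (kernel q)) := by
  let P := ProjectiveResolution.of W
  have ht' := (ext_subsingleton_iff W t P 0).1 ht
  refine (ext_subsingleton_iff W (kernel q) P 0).2 ?_
  intro f hf
  have hcyc : P.complex.d (0+2) (0+1) ≫ (f ≫ kernel.ι q) = 0 := by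
    rw [← Category.assoc, hf, zero_comp]
  obtain ⟨g₁, hg₁⟩ := ht' (f ≫ kernel.ι q) hcyc
  have h0 : P.complex.d (0+1) 0 ≫ (g₁ ≫ q) = 0 := by
    rw [← Category.assoc, hg₁, Category.assoc, kernel.condition, comp_zero]
  obtain ⟨u, hu⟩ := CokernelCofork.IsColimit.desc' P.isColimitCokernelCofork (g₁ ≫ q) h0
  obtain ⟨v, hv⟩ := hlift u
  have hgq : (g₁ - P.π.f 0 ≫ v) ≫ q = 0 := by
    rw [Preadditive.sub_comp, Category.assoc (P.π.f 0) v q]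
    erw [hv]
    rw [show P.π.f 0 ≫ u = g₁ ≫ q from hu, sub_self]
  refine ⟨kernel.lift q (g₁ - P.π.f 0 ≫ v) hgq, ?_⟩
  apply (cancel_mono (kernel.ι q)).1
  rw [Category.assoc, kernel.lift_ι, Preadditive.comp_sub, hg₁, ← Category.assoc (P.complex.d (0+1) 0) (P.π.f 0) v,
    P.complex_d_comp_π_f_zero]
  erw [zero_comp, sub_zero]

/-- If `r : s₁ ⟶ K` is epi, `Ext¹(X, s₁) = 0` and `Ext²(X, kernel r) = 0`,
then `Ext¹(X, K) = 0`. -/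
lemma ext_one_subsingleton_of_epi {X K s1 : A} (r : s1 ⟶ K) [Epi r]
    (hs : Subsingleton (((Ext k A 1).obj (op X)).obj s1))
    (hk : Subsingleton (((Ext k A 2).obj (op X)).obj (kernel r))) :
    Subsingleton (((Ext k A 1).obj (op X)).obj K) := by
  let P := ProjectiveResolution.of X
  have hs' := (ext_subsingleton_iff X s1 P 0).1 hs
  have hk' := (ext_subsingleton_iff X (kernel r) P 1).1 hk
  refine (ext_subsingleton_iff X K P 0).2 ?_
  intro f hf
  haveI := P.projective (0+1)
  let f₁ : P.complex.X (0+1) ⟶ s1 := Projective.factorThru f r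
  have hf₁ : f₁ ≫ r = f := Projective.factorThru_comp f r
  have h2 : (P.complex.d (0+2) (0+1) ≫ f₁) ≫ r = 0 := by
    rw [Category.assoc, hf₁, hf]
  have hcyc : P.complex.d (1+2) (1+1) ≫ kernel.lift r (P.complex.d (0+2) (0+1) ≫ f₁) h2 = 0 := by
    apply (cancel_mono (kernel.ι r)).1
    rw [Category.assoc, kernel.lift_ι, ← Category.assoc, zero_comp]
    rw [show P.complex.d (1+2) (1+1) ≫ P.complex.d (0+2) (0+1) = 0 from
      P.complex.d_comp_d _ _ _, zero_comp]
  obtain ⟨h', hh'⟩ := hk' _ hcyc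
  have hcyc2 : P.complex.d (0+2) (0+1) ≫ (f₁ - h' ≫ kernel.ι r) = 0 := by
    rw [Preadditive.comp_sub, ← Category.assoc]
    rw [show P.complex.d (1+1) 1 ≫ h' = _ from hh', kernel.lift_ι, sub_self]
  obtain ⟨g₁, hg₁⟩ := hs' _ hcyc2
  refine ⟨g₁ ≫ r, ?_⟩
  rw [← Category.assoc, hg₁, Preadditive.sub_comp, Category.assoc, kernel.condition,
    comp_zero, sub_zero, hf₁]

/-- If `q : t ⟶ X` is epi and `Ext¹(X, kernel q) = 0`, then `q` has a section. -/
lemma section_of_ext_one_subsingleton {X t : A} (q : t ⟶ X) [Epi q]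
    (h : Subsingleton (((Ext k A 1).obj (op X)).obj (kernel q))) :
    ∃ σ : X ⟶ t, σ ≫ q = 𝟙 X := by
  let P := ProjectiveResolution.of X
  have h' := (ext_subsingleton_iff X (kernel q) P 0).1 h
  haveI := P.projective 0
  let l0 : P.complex.X 0 ⟶ t := Projective.factorThru (X := X) (P.π.f 0) q
  have hl0 : l0 ≫ q = P.π.f 0 := Projective.factorThru_comp (X := X) (P.π.f 0) q
  have hd : (P.complex.d (0+1) 0 ≫ l0) ≫ q = 0 := by
    rw [Category.assoc, hl0]
    exact P.complex_d_comp_π_f_zero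
  have hcyc : P.complex.d (0+2) (0+1) ≫ kernel.lift q (P.complex.d (0+1) 0 ≫ l0) hd = 0 := by
    apply (cancel_mono (kernel.ι q)).1
    rw [Category.assoc, kernel.lift_ι, ← Category.assoc, zero_comp]
    rw [show P.complex.d (0+2) (0+1) ≫ P.complex.d (0+1) 0 = 0 from
      P.complex.d_comp_d _ _ _, zero_comp]
  obtain ⟨g, hg⟩ := h' _ hcyc
  have hh : P.complex.d (0+1) 0 ≫ (l0 - g ≫ kernel.ι q) = 0 := by
    rw [Preadditive.comp_sub, ← Category.assoc]
    rw [show P.complex.d (0+1) 0 ≫ g = _ from hg, kernel.lift_ι, sub_self]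
  obtain ⟨σ, hσ⟩ := CokernelCofork.IsColimit.desc' P.isColimitCokernelCofork _ hh
  refine ⟨σ, ?_⟩
  apply (cancel_epi (P.π.f 0)).1
  erw [← Category.assoc]
  erw [show P.π.f 0 ≫ σ = _ from hσ, Preadditive.sub_comp, hl0, Category.assoc,
    kernel.condition, comp_zero, sub_zero]
  simp
  exact (Category.comp_id _).symm

/-- A split epi with kernel gives a biproduct decomposition. -/
lemma iso_biprod_of_section {X t : A} (q : t ⟶ X) (σ : X ⟶ t) (hσ : σ ≫ q = 𝟙 X) :
    Nonempty (t ≅ X ⊞ kernel q) := by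
  have hρ : (𝟙 t - q ≫ σ) ≫ q = 0 := by
    rw [Preadditive.sub_comp, Category.id_comp, Category.assoc, hσ, Category.comp_id, sub_self]
  let ρ : t ⟶ kernel q := kernel.lift q _ hρ
  have hρι : ρ ≫ kernel.ι q = 𝟙 t - q ≫ σ := kernel.lift_ι _ _ _
  refine ⟨⟨biprod.lift q ρ, biprod.desc σ (kernel.ι q), ?_, ?_⟩⟩
  · rw [biprod.lift_desc, hρι]
    abel
  · apply biprod.hom_ext'
    · rw [biprod.inl_desc_assoc, Category.comp_id, biprod.lift_eq, Preadditive.comp_add,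
        ← Category.assoc, ← Category.assoc, hσ, Category.id_comp]
      have : σ ≫ ρ = 0 := by
        apply (cancel_mono (kernel.ι q)).1
        rw [Category.assoc, hρι, Preadditive.comp_sub, Category.comp_id, ← Category.assoc, hσ,
          Category.id_comp, sub_self, zero_comp]
      rw [this, zero_comp, add_zero]
    · rw [biprod.inr_desc_assoc, Category.comp_id, biprod.lift_eq, Preadditive.comp_add,
        ← Category.assoc, ← Category.assoc, kernel.condition, zero_comp, zero_add]
      have : kernel.ι q ≫ ρ = 𝟙 (kernel q) := by
        apply (cancel_mono (kernel.ι q)).1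
        rw [Category.assoc, hρι, Preadditive.comp_sub, Category.comp_id, ← Category.assoc,
          kernel.condition, zero_comp, sub_zero, Category.id_comp]
      rw [this, Category.id_comp]

end Helpers

/-- Let `A` be an abelian category (Krull–Schmidt, with enough projectives and injectives,
all objects of finite length) and `St` a support tilting subcategory.  If `X` has
projective dimension at most 1 (i.e. `Ext^n(X, -) = 0` for `n ≥ 2`), is a subquotient of
an object of `St`, and satisfies `Ext¹(St, X) = 0` and `Ext¹(X, St) = 0`, then `X` is
isomorphic to a direct summand of an object of `St`. -/
theorem stmt17 {k : Type*} [Field k] {A : Type*} [Category A] [Abelian A] [Linear k A]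
    [EnoughProjectives A] [EnoughInjectives A]
    (St : Set A) (hSt : SupportTilting k St) (X : A)
    (hpd : ∀ n : ℕ, 2 ≤ n → ∀ Y : A, Subsingleton (((Ext k A n).obj (op X)).obj Y))
    (hsub : ∃ s ∈ St, IsSubquotientOf X s)
    (h1 : ∀ s ∈ St, Subsingleton (((Ext k A 1).obj (op s)).obj X))
    (h2 : ∀ s ∈ St, Subsingleton (((Ext k A 1).obj (op X)).obj s)) :
    ∃ s ∈ St, ∃ Y : A, Nonempty (s ≅ X ⊞ Y) := by
  obtain ⟨hsum, hsumm, hprec, hpre, hext2, hext1, hgen⟩ := hSt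
  -- an epi from an object of St onto X
  obtain ⟨s0, hs0, p0, hp0⟩ := hgen X hsub h1
  -- a precover of X
  obtain ⟨v, hv, c, hc⟩ := hprec X
  -- combine into an epi precover q : t ⟶ X
  have ht : (v ⊞ s0) ∈ St := hsum v hv s0 hs0
  let q : v ⊞ s0 ⟶ X := biprod.desc c p0
  haveI hq : Epi q := by
    have h : biprod.inr ≫ q = p0 := biprod.inr_desc _ _
    exact epi_of_epi_fac h
  have hcover : ∀ s' ∈ St, ∀ f : s' ⟶ X, ∃ g : s' ⟶ v ⊞ s0, g ≫ q = f := by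
    intro s' hs' f
    obtain ⟨g, hg⟩ := hc s' hs' f
    exact ⟨g ≫ biprod.inl, by rw [Category.assoc, biprod.inl_desc, hg]⟩
  -- Ext¹(St, kernel q) = 0
  have hK1 : ∀ s' ∈ St, Subsingleton (((Ext k A 1).obj (op s')).obj (kernel q)) := by
    intro s' hs'
    exact ext_one_kernel_subsingleton q (hcover s' hs') (hext1 s' hs' _ ht)
  -- kernel q is a subquotient of t ∈ St
  have hKsub : ∃ s ∈ St, IsSubquotientOf (kernel q) s :=
    ⟨v ⊞ s0, ht, kernel q, kernel.ι q, 𝟙 _, inferInstance, inferInstance⟩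
  obtain ⟨s1, hs1, r, hr⟩ := hgen (kernel q) hKsub hK1
  haveI := hr
  -- Ext¹(X, kernel q) = 0
  have hXK : Subsingleton (((Ext k A 1).obj (op X)).obj (kernel q)) :=
    ext_one_subsingleton_of_epi r (h2 s1 hs1) (hpd 2 le_rfl (kernel r))
  obtain ⟨σ, hσ⟩ := section_of_ext_one_subsingleton q hXK
  obtain ⟨e⟩ := iso_biprod_of_section q σ hσ
  exact ⟨v ⊞ s0, ht, kernel q, ⟨e⟩⟩
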